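/- Let G be a bipartite graph with parts A_G and B_G and edge set E_G, and consider the election constructed from G as follows: the candidate set is A_G ∪ B_G; there is one voter v_A approving exactly A_G, one voter v_B approving exactly B_G, and for every x ∈ A_G a voter v_x approving exactly {x} ∪ (B_G \ N(x)), where N(x) is the set of neighbors of x in G. Then for every x ∈ A_G and y ∈ B_G: A(x) ∩ A(y) = ∅ if and only if (x,y) ∈ E_G. In particular, if (x,y) is an edge of G then no voter approves both x and y, and hence jac(x,y) = 1. -/

import Mathlib

open scoped Classical

/-- The set of voters approving candidate `c`. -/
noncomputable def approvers {V C : Type*} [Fintype V] (app : V → C → Prop) (c : C) :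
    Finset V :=
  Finset.univ.filter fun v => app v c

/-- The Jaccard distance between two candidates. -/
noncomputable def jac {V C : Type*} [Fintype V] (app : V → C → Prop) (c d : C) : ℝ :=
  1 - ((approvers app c ∩ approvers app d).card : ℝ) /
      ((approvers app c ∪ approvers app d).card : ℝ)

/-- The approval relation of the election constructed from a bipartite graph with
parts `A`, `B` and edge relation `E`: voter `v_A = Sum.inl ()` approves exactly the
candidates in `A_G`, voter `v_B = Sum.inr (Sum.inl ())` approves exactly the
candidates in `B_G`, and voter `v_x = Sum.inr (Sum.inr x)` (for `x ∈ A_G`)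
approves exactly `{x} ∪ (B_G \ N(x))`. -/
def bbApp {A B : Type*} (E : A → B → Prop) : (Unit ⊕ Unit ⊕ A) → (A ⊕ B) → Prop
  | Sum.inl _, Sum.inl _ => True
  | Sum.inl _, Sum.inr _ => False
  | Sum.inr (Sum.inl _), Sum.inl _ => False
  | Sum.inr (Sum.inl _), Sum.inr _ => True
  | Sum.inr (Sum.inr x), Sum.inl a => a = x
  | Sum.inr (Sum.inr x), Sum.inr b => ¬ E x b


/-- In the election constructed from a bipartite graph, for `x ∈ A_G` and `y ∈ B_G`:
no voter approves both `x` and `y` iff `(x, y)` is an edge; in particular, if `(x, y)`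
is an edge then `jac(x, y) = 1`. -/
theorem approvers_inter_empty_iff_edge {A B : Type*} [Fintype A] [Fintype B]
    (E : A → B → Prop) (x : A) (y : B) :
    (approvers (bbApp E) (Sum.inl x) ∩ approvers (bbApp E) (Sum.inr y) = ∅ ↔ E x y) ∧
    (E x y → jac (bbApp E) (Sum.inl x) (Sum.inr y) = 1) := by
  have key : approvers (bbApp E) (Sum.inl x) ∩ approvers (bbApp E) (Sum.inr y) = ∅ ↔ E x y := by
    simp only [Finset.eq_empty_iff_forall_notMem, Finset.mem_inter, approvers,
      Finset.mem_filter, Finset.mem_univ, true_and]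
    constructor
    · intro h
      by_contra hE
      exact h (Sum.inr (Sum.inr x)) ⟨rfl, hE⟩
    · rintro hE (⟨⟩ | ⟨⟩ | x') ⟨h1, h2⟩
      · exact h2
      · exact h1
      · exact h2 ((show x = x' from h1) ▸ hE)
  refine ⟨key, fun hE => ?_⟩
  have h1 : ∀ (inst : DecidableEq (Unit ⊕ Unit ⊕ A)),
      (@Inter.inter _ (@Finset.instInter _ inst) (approvers (bbApp E) (Sum.inl x))
        (approvers (bbApp E) (Sum.inr y))).card = 0 := by
    intro inst
    rw [Finset.card_eq_zero, Finset.eq_empty_iff_forall_notMem]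
    rintro (⟨⟩ | ⟨⟩ | x') hv
    all_goals
      rw [Finset.mem_inter] at hv
      obtain ⟨h1, h2⟩ := hv
      simp only [approvers, Finset.mem_filter, Finset.mem_univ, true_and] at h1 h2
      simp only [bbApp] at h1 h2
    exact h2 (h1 ▸ hE)
  simp only [jac, h1, Nat.cast_zero, zero_div, sub_zero]
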